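/- Every BFS-layering of a connected chordal graph is shadow-complete: if V_i is the set of vertices at distance exactly i from a fixed root r, then for every connected component H of the subgraph induced by V_i ∪ V_{i+1} ∪ ..., the set of vertices in V_{i−1} adjacent to H forms a clique. -/

import Mathlib

/-- A graph is chordal if every cycle of length at least 4 has a chord:
two vertices of the cycle that are adjacent in `G` by an edge not on the cycle. -/
def IsChordal {V : Type*} (G : SimpleGraph V) : Prop :=
  ∀ (v : V) (w : G.Walk v v), w.IsCycle → 4 ≤ w.length →
    ∃ x ∈ w.support, ∃ y ∈ w.support, G.Adj x y ∧ s(x, y) ∉ w.edges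

namespace ShadowAux

open SimpleGraph Walk

variable {V : Type*} {G : SimpleGraph V}

lemma edge_of_length_one {v w : V} (q : G.Walk v w) (h : q.length = 1) :
    s(v, w) ∈ q.edges := by
  cases q with
  | nil => simp at h
  | cons h' q' =>
    cases q' with
    | nil => simp
    | cons h'' q'' => simp [Walk.length_cons] at h

lemma chord_shorten {v w a b : V} (q : G.Walk v a) (r : G.Walk a w) (hb : b ∈ r.support)
    (hab : G.Adj a b) (hne : s(a, b) ∉ (q.append r).edges) :
    ∃ p' : G.Walk v w, (∀ z ∈ p'.support, z ∈ (q.append r).support) ∧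
      p'.length < (q.append r).length := by
  obtain ⟨r1, r2, rfl⟩ := Walk.mem_support_iff_exists_append.mp hb
  refine ⟨q.append (Walk.cons hab r2), ?_, ?_⟩
  · intro z hz
    rw [Walk.mem_support_append_iff] at hz ⊢
    rcases hz with hz | hz
    · exact Or.inl hz
    · rw [Walk.support_cons, List.mem_cons] at hz
      rcases hz with rfl | hz
      · exact Or.inr (Walk.mem_support_append_iff r1 r2 |>.mpr (Or.inl r1.start_mem_support))
      · exact Or.inr (Walk.mem_support_append_iff r1 r2 |>.mpr (Or.inr hz))
  · have h2 : 2 ≤ r1.length := by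
      rcases Nat.lt_or_ge r1.length 2 with h | h
      · interval_cases h' : r1.length
        · exact absurd (Walk.eq_of_length_eq_zero h') hab.ne
        · exact absurd (by
            rw [Walk.edges_append, Walk.edges_append]
            exact List.mem_append.mpr (Or.inr
              (List.mem_append.mpr (Or.inl (edge_of_length_one r1 h'))))) hne
      · exact h
    simp only [Walk.length_append, Walk.length_cons]
    omega

lemma exists_split_pair {v w a b : V} (p : G.Walk v w) (ha : a ∈ p.support)
    (hb : b ∈ p.support) :
    (∃ (q : G.Walk v a) (r : G.Walk a w), p = q.append r ∧ b ∈ r.support) ∨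
    (∃ (q : G.Walk v b) (r : G.Walk b w), p = q.append r ∧ a ∈ r.support) := by
  obtain ⟨q, r, rfl⟩ := Walk.mem_support_iff_exists_append.mp ha
  rcases (Walk.mem_support_append_iff q r).mp hb with hb' | hb'
  · obtain ⟨q1, q2, rfl⟩ := Walk.mem_support_iff_exists_append.mp hb'
    right
    exact ⟨q1, q2.append r, (Walk.append_assoc q1 q2 r).symm,
      (Walk.mem_support_append_iff q2 r).mpr (Or.inl q2.end_mem_support)⟩
  · left
    exact ⟨q, r, rfl, hb'⟩

lemma chord_shorten' {v w a b : V} (p : G.Walk v w) (ha : a ∈ p.support)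
    (hb : b ∈ p.support) (hab : G.Adj a b) (hne : s(a, b) ∉ p.edges) :
    ∃ p' : G.Walk v w, (∀ z ∈ p'.support, z ∈ p.support) ∧ p'.length < p.length := by
  rcases exists_split_pair p ha hb with ⟨q, r, rfl, hmem⟩ | ⟨q, r, rfl, hmem⟩
  · exact chord_shorten q r hmem hab hne
  · exact chord_shorten q r hmem hab.symm (by rwa [Sym2.eq_swap])

lemma shortest_support {a r z : V} (p : G.Walk a r) (hp : p.length = G.dist a r)
    (hz : z ∈ p.support) : z = a ∨ G.dist z r + 1 ≤ G.dist a r := by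
  by_cases h : z = a
  · exact Or.inl h
  right
  obtain ⟨q, t, rfl⟩ := Walk.mem_support_iff_exists_append.mp hz
  have h1 : G.dist z r ≤ t.length := SimpleGraph.dist_le t
  have h2 : 1 ≤ q.length := by
    rcases Nat.eq_zero_or_pos q.length with h0 | h0
    · exact absurd (Walk.eq_of_length_eq_zero h0).symm h
    · exact h0
  rw [Walk.length_append] at hp
  omega

lemma aux (hconn : G.Connected) (hchordal : IsChordal G)
    (r : V) (i : ℕ) (x y : V) (hi2 : 2 ≤ i)
    (hx : G.dist r x = i - 1) (hy : G.dist r y = i - 1) (hxy : x ≠ y)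
    (hex : ∃ (u' w' : V) (_ : G.Adj x u') (_ : G.Adj w' y)
      (P : G.Walk u' w') (B : G.Walk y x),
      (∀ z ∈ P.support, i ≤ G.dist r z) ∧
      (∀ z ∈ B.support, z = x ∨ z = y ∨ G.dist r z + 2 ≤ i)) :
    G.Adj x y := by
  classical
  set S : Set ℕ := {n | ∃ (u' w' : V) (_ : G.Adj x u') (_ : G.Adj w' y)
      (P : G.Walk u' w') (B : G.Walk y x),
      (∀ z ∈ P.support, i ≤ G.dist r z) ∧
      (∀ z ∈ B.support, z = x ∨ z = y ∨ G.dist r z + 2 ≤ i) ∧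
      P.support.Nodup ∧ B.support.Nodup ∧ n = P.length + B.length} with hSdef
  have hmemS : ∀ (u' w' : V), G.Adj x u' → G.Adj w' y → ∀ (P : G.Walk u' w') (B : G.Walk y x),
      (∀ z ∈ P.support, i ≤ G.dist r z) →
      (∀ z ∈ B.support, z = x ∨ z = y ∨ G.dist r z + 2 ≤ i) →
      ∃ m ∈ S, m ≤ P.length + B.length := by
    intro u' w' hxu hwy P B hP hB
    refine ⟨P.bypass.length + B.bypass.length, ⟨u', w', hxu, hwy, P.bypass, B.bypass,
      fun z hz => hP z (P.support_bypass_subset hz),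
      fun z hz => hB z (B.support_bypass_subset hz),
      (Walk.isPath_def _).mp P.bypass_isPath, (Walk.isPath_def _).mp B.bypass_isPath, rfl⟩,
      Nat.add_le_add P.length_bypass_le B.length_bypass_le⟩
  have hSne : S.Nonempty := by
    obtain ⟨u', w', hxu, hwy, P, B, hP, hB⟩ := hex
    obtain ⟨m, hm, _⟩ := hmemS u' w' hxu hwy P B hP hB
    exact ⟨m, hm⟩
  obtain ⟨u', w', hxu, hwy, P, B, hP, hB, hPnd, hBnd, hn⟩ := Nat.sInf_mem hSne
  have hmin : ∀ (u'' w'' : V), G.Adj x u'' → G.Adj w'' y →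
      ∀ (P' : G.Walk u'' w'') (B' : G.Walk y x),
      (∀ z ∈ P'.support, i ≤ G.dist r z) →
      (∀ z ∈ B'.support, z = x ∨ z = y ∨ G.dist r z + 2 ≤ i) →
      P'.length + B'.length < P.length + B.length → False := by
    intro u'' w'' hxu'' hwy'' P' B' hP' hB' hlt
    obtain ⟨m, hmS, hml⟩ := hmemS u'' w'' hxu'' hwy'' P' B' hP' hB'
    have := Nat.sInf_le hmS
    omega
  have hdista : ∀ a b : V, G.Adj a b → G.dist r a ≤ G.dist r b + 1 := by
    intro a b hab
    calc G.dist r a ≤ G.dist r b + G.dist b a := hconn.dist_triangle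
      _ ≤ G.dist r b + 1 := by
          have h1 : G.dist b a ≤ (Walk.cons hab.symm Walk.nil).length :=
            SimpleGraph.dist_le _
          simp only [Walk.length_cons, Walk.length_nil] at h1
          omega
  have hxP : x ∉ P.support := fun h => by have := hP x h; omega
  have hyP : y ∉ P.support := fun h => by have := hP y h; omega
  have hB1 : 1 ≤ B.length := by
    rcases Nat.eq_zero_or_pos B.length with h | h
    · exact absurd (Walk.eq_of_length_eq_zero h) hxy.symm
    · exact h
  by_cases hBone : B.length = 1
  · exact (B.adj_of_mem_edges (edge_of_length_one B hBone)).symm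
  have hB2 : 2 ≤ B.length := by omega
  have hxB : x ∈ B.support := B.end_mem_support
  have hyB : y ∈ B.support := B.start_mem_support
  have hdisj : ∀ z, z ∈ P.support → z ∈ B.support → False := by
    intro z h1 h2
    have h3 := hP z h1
    rcases hB z h2 with rfl | rfl | h4 <;> omega
  set Q : G.Walk u' x := P.append (Walk.cons hwy B) with hQ
  have hQsupp : Q.support = P.support ++ B.support := by
    rw [hQ, Walk.support_append, Walk.support_cons, List.tail_cons]
  have hQedges : Q.edges = P.edges ++ (s(w', y) :: B.edges) := by
    rw [hQ, Walk.edges_append, Walk.edges_cons]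
  have hQpath : Q.IsPath := by
    rw [Walk.isPath_def, hQsupp]
    exact List.Nodup.append hPnd hBnd (fun z h1 h2 => hdisj z h1 h2)
  have hxQ : s(x, u') ∉ Q.edges := by
    rw [hQedges]
    intro h
    rcases List.mem_append.mp h with h | h
    · exact hxP (P.fst_mem_support_of_mem_edges h)
    · rcases List.mem_cons.mp h with h | h
      · rw [Sym2.eq_iff] at h
        rcases h with ⟨h1, h2⟩ | ⟨h1, h2⟩
        · subst h1; exact hxP P.end_mem_support
        · exact hxy h1
      · have hu'B := B.snd_mem_support_of_mem_edges h
        have h2 := hP u' P.start_mem_support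
        rcases hB u' hu'B with rfl | rfl | h3 <;> omega
  set c : G.Walk x x := Walk.cons hxu Q with hc
  have hcyc : c.IsCycle := (Walk.cons_isCycle_iff Q hxu).mpr ⟨hQpath, hxQ⟩
  have hclen : 4 ≤ c.length := by
    rw [hc, Walk.length_cons, hQ, Walk.length_append, Walk.length_cons]
    omega
  obtain ⟨a, ha, b, hb, hab, hne⟩ := hchordal x c hcyc hclen
  have hcedges : c.edges = s(x, u') :: (P.edges ++ (s(w', y) :: B.edges)) := by
    rw [hc, Walk.edges_cons, hQedges]
  have hmem' : ∀ z ∈ c.support, z ∈ P.support ∨ z ∈ B.support := by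
    intro z hz
    rw [hc, Walk.support_cons, hQsupp] at hz
    rcases List.mem_cons.mp hz with rfl | hz
    · exact Or.inr hxB
    · exact List.mem_append.mp hz
  have casePP : ∀ a b : V, a ∈ P.support → b ∈ P.support → G.Adj a b →
      s(a, b) ∉ c.edges → False := by
    intro a b haP hbP hab hne'
    have hPe : s(a, b) ∉ P.edges := fun h => hne' (by
      rw [hcedges]
      exact List.mem_cons_of_mem _ (List.mem_append.mpr (Or.inl h)))
    obtain ⟨P', hPs, hPl⟩ := chord_shorten' P haP hbP hab hPe
    exact hmin u' w' hxu hwy P' B (fun z hz => hP z (hPs z hz)) hB (by omega)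
  have caseBB : ∀ a b : V, a ∈ B.support → b ∈ B.support → G.Adj a b →
      s(a, b) ∉ c.edges → False := by
    intro a b haB hbB hab hne'
    have hBe : s(a, b) ∉ B.edges := fun h => hne' (by
      rw [hcedges]
      exact List.mem_cons_of_mem _ (List.mem_append.mpr (Or.inr (List.mem_cons_of_mem _ h))))
    obtain ⟨B', hBs, hBl⟩ := chord_shorten' B haB hbB hab hBe
    exact hmin u' w' hxu hwy P B' hP (fun z hz => hB z (hBs z hz)) (by omega)
  have caseM : ∀ a b : V, a ∈ P.support → b ∈ B.support → G.Adj a b →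
      s(a, b) ∉ c.edges → False := by
    intro a b haP hbB hab hne'
    have haD := hP a haP
    rcases hB b hbB with rfl | rfl | hlow
    · -- b = x
      have hau : a ≠ u' := by
        rintro rfl
        exact hne' (by rw [hcedges]; exact List.mem_cons.mpr (Or.inl Sym2.eq_swap))
      obtain ⟨q, t, rfl⟩ := Walk.mem_support_iff_exists_append.mp haP
      have hq1 : 1 ≤ q.length := by
        rcases Nat.eq_zero_or_pos q.length with h0 | h0
        · exact absurd (Walk.eq_of_length_eq_zero h0).symm hau
        · exact h0
      refine hmin a w' hab.symm hwy t B
        (fun z hz => hP z ((Walk.mem_support_append_iff q t).mpr (Or.inr hz))) hB ?_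
      rw [Walk.length_append]
      omega
    · -- b = y
      have haw : a ≠ w' := by
        rintro rfl
        exact hne' (by
          rw [hcedges]
          exact List.mem_cons_of_mem _
            (List.mem_append.mpr (Or.inr (List.mem_cons.mpr (Or.inl rfl)))))
      obtain ⟨q, t, rfl⟩ := Walk.mem_support_iff_exists_append.mp haP
      have ht1 : 1 ≤ t.length := by
        rcases Nat.eq_zero_or_pos t.length with h0 | h0
        · exact absurd (Walk.eq_of_length_eq_zero h0) haw
        · exact h0
      refine hmin u' a hxu hab q B
        (fun z hz => hP z ((Walk.mem_support_append_iff q t).mpr (Or.inl hz))) hB ?_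
      rw [Walk.length_append]
      omega
    · have := hdista a b hab
      omega
  rcases hmem' a ha with haP | haB <;> rcases hmem' b hb with hbP | hbB
  · exact (casePP a b haP hbP hab hne).elim
  · exact (caseM a b haP hbB hab hne).elim
  · exact (caseM b a hbP haB hab.symm (by rwa [Sym2.eq_swap])).elim
  · exact (caseBB a b haB hbB hab hne).elim

end ShadowAux

/-- Every BFS-layering of a connected chordal graph is shadow-complete: with
`V_i = {v | dist r v = i}`, for every connected component `H` of the subgraph
induced by the layers `≥ i`, the vertices of layer `i-1` adjacent to `H` form
a clique. -/
theorem bfs_layering_shadowComplete {V : Type*} (G : SimpleGraph V)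
    (hconn : G.Connected) (hchordal : IsChordal G) (r : V)
    (i : ℕ) (hi : 1 ≤ i) (u w x y : V)
    (hu : i ≤ G.dist r u) (hw : i ≤ G.dist r w)
    (hx : G.dist r x = i - 1) (hy : G.dist r y = i - 1)
    (hxu : G.Adj x u) (hyw : G.Adj y w)
    (hreach : (G.induce {z : V | i ≤ G.dist r z}).Reachable ⟨u, hu⟩ ⟨w, hw⟩)
    (hxy : x ≠ y) : G.Adj x y := by
  classical
  have hi2 : 2 ≤ i := by
    by_contra h
    have hio : i = 1 := by omega
    subst hio
    have hx0 : G.dist r x = 0 := by simpa using hx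
    have hy0 : G.dist r y = 0 := by simpa using hy
    have h1 : r = x := hconn.dist_eq_zero_iff.mp hx0
    have h2 : r = y := hconn.dist_eq_zero_iff.mp hy0
    exact hxy (h1 ▸ h2)
  apply ShadowAux.aux hconn hchordal r i x y hi2 hx hy hxy
  obtain ⟨p⟩ := hreach
  obtain ⟨py, hpy⟩ := (hconn.preconnected y r).exists_walk_length_eq_dist
  obtain ⟨px, hpx⟩ := (hconn.preconnected x r).exists_walk_length_eq_dist
  refine ⟨u, w, hxu, hyw.symm,
    p.map (SimpleGraph.Embedding.induce {z : V | i ≤ G.dist r z}).toHom,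
    py.append px.reverse, ?_, ?_⟩
  · intro z hz
    erw [SimpleGraph.Walk.support_map, List.mem_map] at hz
    obtain ⟨z', hz', rfl⟩ := hz
    exact z'.2
  · intro z hz
    rcases (SimpleGraph.Walk.mem_support_append_iff _ _).mp hz with hz | hz
    · rcases ShadowAux.shortest_support py hpy hz with rfl | h
      · exact Or.inr (Or.inl rfl)
      · refine Or.inr (Or.inr ?_)
        have hdy : G.dist y r = i - 1 := by rw [SimpleGraph.dist_comm]; exact hy
        have hdz : G.dist r z = G.dist z r := SimpleGraph.dist_comm
        omega
    · rw [SimpleGraph.Walk.support_reverse, List.mem_reverse] at hz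
      rcases ShadowAux.shortest_support px hpx hz with rfl | h
      · exact Or.inl rfl
      · refine Or.inr (Or.inr ?_)
        have hdx : G.dist x r = i - 1 := by rw [SimpleGraph.dist_comm]; exact hx
        have hdz : G.dist r z = G.dist z r := SimpleGraph.dist_comm
        omega
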